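/- arXiv:2109.14018 — 3 statements merged into one kernel-verified Lean document; each statement's English description precedes it below -/
import Mathlib

section
/- Let f : ℝ^d → ℝ be real-analytic on an open set U, let Γ ⊆ U be a nonempty compact set on which f is constant with value f*, and suppose that at every point x ∈ Γ a local Łojasiewicz inequality holds: there exist θ_x ∈ (0, 1/2], κ_x > 0 and a neighborhood U_x of x such that |f(y) − f*|^{1−θ_x} ≤ κ_x ‖∇f(y)‖ for all y ∈ U_x. Then there exist uniform constants θ ∈ (0, 1/2], κ > 0 and an open neighborhood V of Γ such that |f(y) − f*|^{1−θ} ≤ κ ‖∇f(y)‖ for all y ∈ V. -/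
open Filter Topology

/-- **Uniform Łojasiewicz inequality.** If `f` is real-analytic on an open set `U`,
`Γ ⊆ U` is a nonempty compact set on which `f` is constant equal to `f*`, and at
every point of `Γ` a local Łojasiewicz inequality holds, then there are uniform
constants `θ ∈ (0, 1/2]`, `κ > 0` and an open neighborhood `V` of `Γ` such that
`|f(y) - f*| ^ (1 - θ) ≤ κ ‖∇f(y)‖` for all `y ∈ V`. -/
theorem uniform_lojasiewicz {d : ℕ}
    (f : EuclideanSpace ℝ (Fin d) → ℝ) (U : Set (EuclideanSpace ℝ (Fin d)))
    (hU : IsOpen U) (hf : AnalyticOnNhd ℝ f U)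
    (Γ : Set (EuclideanSpace ℝ (Fin d))) (hΓU : Γ ⊆ U)
    (hΓne : Γ.Nonempty) (hΓc : IsCompact Γ)
    (fstar : ℝ) (hconst : ∀ x ∈ Γ, f x = fstar)
    (hloc : ∀ x ∈ Γ, ∃ θ ∈ Set.Ioc (0 : ℝ) (1 / 2), ∃ κ > (0 : ℝ),
      ∃ Ux ∈ 𝓝 x, ∀ y ∈ Ux, |f y - fstar| ^ (1 - θ) ≤ κ * ‖gradient f y‖) :
    ∃ θ ∈ Set.Ioc (0 : ℝ) (1 / 2), ∃ κ > (0 : ℝ),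
      ∃ V : Set (EuclideanSpace ℝ (Fin d)), IsOpen V ∧ Γ ⊆ V ∧
        ∀ y ∈ V, |f y - fstar| ^ (1 - θ) ≤ κ * ‖gradient f y‖ := by
  choose θ hθ κ hκ Ux hUx hineq using hloc
  -- the set where |f - fstar| < 1, intersected with U, is open
  set S : Set (EuclideanSpace ℝ (Fin d)) := {y | y ∈ U ∧ |f y - fstar| < 1} with hS
  have hSopen : IsOpen S := by
    rw [isOpen_iff_mem_nhds]
    rintro y ⟨hyU, hy1⟩
    have hcont : ContinuousAt f y := (hf y hyU).continuousAt
    have h1 : {z | |f z - fstar| < 1} ∈ 𝓝 y := by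
      have : ContinuousAt (fun z => |f z - fstar|) y := (hcont.sub continuousAt_const).abs
      exact this.preimage_mem_nhds (isOpen_Iio.mem_nhds hy1)
    filter_upwards [hU.mem_nhds hyU, h1] with z hz1 hz2 using ⟨hz1, hz2⟩
  -- neighborhoods
  set W : ∀ x ∈ Γ, Set (EuclideanSpace ℝ (Fin d)) :=
    fun x hx => interior (Ux x hx) ∩ S with hW
  have hWnhds : ∀ (x : EuclideanSpace ℝ (Fin d)) (hx : x ∈ Γ), W x hx ∈ 𝓝 x := by
    intro x hx
    apply Filter.inter_mem (interior_mem_nhds.2 (hUx x hx))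
    apply hSopen.mem_nhds
    refine ⟨hΓU hx, ?_⟩
    simp [hconst x hx]
  obtain ⟨t, hcover⟩ := hΓc.elim_nhds_subcover' W hWnhds
  obtain ⟨x₀, hx₀⟩ := hΓne
  have htne : t.Nonempty := by
    obtain ⟨y, hy, -⟩ := Set.mem_iUnion₂.1 (hcover hx₀)
    exact ⟨y, hy⟩
  refine ⟨t.inf' htne (fun x => θ x x.2), ⟨?_, ?_⟩,
    t.sup' htne (fun x => κ x x.2), ?_, ⋃ x ∈ t, W x x.2, ?_, hcover, ?_⟩
  · exact (Finset.lt_inf'_iff htne).2 fun x hx => (hθ x x.2).1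
  · obtain ⟨x, hx⟩ := htne
    exact le_trans (Finset.inf'_le _ hx) (hθ x x.2).2
  · obtain ⟨x, hx⟩ := htne
    exact lt_of_lt_of_le (hκ x x.2) (Finset.le_sup' (fun (x : Γ) => κ x x.2) hx)
  · exact isOpen_biUnion fun x hx => isOpen_interior.inter hSopen
  · intro y hy
    obtain ⟨x, hx, hyW⟩ := Set.mem_iUnion₂.1 hy
    have hyU : y ∈ Ux x x.2 := interior_subset hyW.1
    have h1 : |f y - fstar| ^ (1 - θ x x.2) ≤ κ x x.2 * ‖gradient f y‖ := hineq x x.2 y hyU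
    have hθle : t.inf' htne (fun x => θ x x.2) ≤ θ x x.2 := Finset.inf'_le _ hx
    have hκle : κ x x.2 ≤ t.sup' htne (fun x => κ x x.2) := Finset.le_sup' (fun (x : Γ) => κ x x.2) hx
    have h2 : |f y - fstar| ^ (1 - t.inf' htne (fun x => θ x x.2)) ≤
        |f y - fstar| ^ (1 - θ x x.2) := by
      rcases eq_or_lt_of_le (abs_nonneg (f y - fstar)) with h0 | h0
      · rw [← h0]
        rw [Real.zero_rpow, Real.zero_rpow]
        · linarith [(hθ x x.2).2]
        · have hpos := (Finset.lt_inf'_iff htne).2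
            fun x hx => (hθ x x.2).1
          have : t.inf' htne (fun x => θ x x.2) ≤ 1/2 :=
            le_trans hθle (hθ x x.2).2
          linarith
      · exact Real.rpow_le_rpow_of_exponent_ge h0 (le_of_lt hyW.2.2) (by linarith)
    calc |f y - fstar| ^ (1 - t.inf' htne (fun x => θ x x.2))
        ≤ κ x x.2 * ‖gradient f y‖ := le_trans h2 h1
      _ ≤ t.sup' htne (fun x => κ x x.2) * ‖gradient f y‖ :=
          mul_le_mul_of_nonneg_right hκle (norm_nonneg _)
end

section
/- Let X ⊆ ℝ^d be compact, f : ℝ^d → ℝ continuously differentiable, and (x_n) a sequence in X satisfying, for constants a > 0, C > 0: the sufficient decrease condition f(x_{n+1}) ≤ f(x_n) − a ‖∇f(x_n)‖² and the step bound ‖x_{n+1} − x_n‖ ≤ C ‖∇f(x_n)‖ for all n. Suppose further that, with f* = lim_n f(x_n) and Γ = {x ∈ X : f(x) = f*}, there are constants θ ∈ (0, 1/2], κ > 0 and a neighborhood V of Γ on which the Łojasiewicz inequality |f(y) − f*|^{1−θ} ≤ κ ‖∇f(y)‖ holds. Then ∇f(x_n) → 0, the series Σ_n ‖∇f(x_n)‖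 converges, and the sequence (x_n) converges to a limit x* with ∇f(x*) = 0. -/
open Filter Topology

private lemma concave_rpow_aux {θ u v : ℝ} (hθ0 : 0 < θ) (hθ1 : θ ≤ 1)
    (hu : 0 < u) (hv : 0 ≤ v) (_hvu : v ≤ u) :
    θ * u ^ (θ - 1) * (u - v) ≤ u ^ θ - v ^ θ := by
  have ht : -1 ≤ v / u - 1 := by
    have : 0 ≤ v / u := div_nonneg hv hu.le
    linarith
  have h := rpow_one_add_le_one_add_mul_self ht hθ0.le hθ1
  rw [add_sub_cancel] at h
  have hA : (0:ℝ) < u ^ θ := Real.rpow_pos_of_pos hu θ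
  have h2 := mul_le_mul_of_nonneg_left h hA.le
  have hv' : u ^ θ * (v / u) ^ θ = v ^ θ := by
    rw [← Real.mul_rpow hu.le (div_nonneg hv hu.le), mul_div_cancel₀ _ hu.ne']
  have hB : u ^ (θ - 1) * u = u ^ θ := by
    rw [Real.rpow_sub hu, Real.rpow_one, div_mul_cancel₀ _ hu.ne']
  have hBv : u ^ θ * (v / u) = u ^ (θ - 1) * v := by
    rw [← hB]; field_simp
  rw [hv'] at h2
  nlinarith [h2, hB, hBv]

/-- **Łojasiewicz convergence lemma.** Let `X ⊆ ℝ^d` be compact, `f` be `C¹`, and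
`(x_n) ⊆ X` satisfy the sufficient decrease condition
`f(x_{n+1}) ≤ f(x_n) - a ‖∇f(x_n)‖²` and the step bound
`‖x_{n+1} - x_n‖ ≤ C ‖∇f(x_n)‖`. If, with `f* = lim f(x_n)` and
`Γ = {x ∈ X : f(x) = f*}`, a Łojasiewicz inequality holds on a neighborhood of `Γ`,
then `∇f(x_n) → 0`, `Σ ‖∇f(x_n)‖ < ∞`, and `x_n` converges to a critical point. -/
theorem lojasiewicz_convergence {d : ℕ}
    (X : Set (EuclideanSpace ℝ (Fin d))) (hX : IsCompact X)
    (f : EuclideanSpace ℝ (Fin d) → ℝ) (hf : ContDiff ℝ 1 f)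
    (x : ℕ → EuclideanSpace ℝ (Fin d)) (hxX : ∀ n, x n ∈ X)
    (a C : ℝ) (ha : 0 < a) (hC : 0 < C)
    (hdec : ∀ n, f (x (n + 1)) ≤ f (x n) - a * ‖gradient f (x n)‖ ^ 2)
    (hstep : ∀ n, ‖x (n + 1) - x n‖ ≤ C * ‖gradient f (x n)‖)
    (fstar : ℝ) (hfstar : Tendsto (fun n => f (x n)) atTop (𝓝 fstar))
    (θ κ : ℝ) (hθ : θ ∈ Set.Ioc (0 : ℝ) (1 / 2)) (hκ : 0 < κ)
    (V : Set (EuclideanSpace ℝ (Fin d))) (hVopen : IsOpen V)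
    (hΓV : {y ∈ X | f y = fstar} ⊆ V)
    (hloj : ∀ y ∈ V, |f y - fstar| ^ (1 - θ) ≤ κ * ‖gradient f y‖) :
    Tendsto (fun n => gradient f (x n)) atTop (𝓝 0) ∧
    Summable (fun n => ‖gradient f (x n)‖) ∧
    ∃ xstar, Tendsto x atTop (𝓝 xstar) ∧ gradient f xstar = 0 := by
  obtain ⟨hθ0, hθ1⟩ := hθ
  have hθ1' : θ ≤ 1 := hθ1.trans (by norm_num)
  set g : ℕ → EuclideanSpace ℝ (Fin d) := fun n => gradient f (x n) with hg
  -- continuity of f and of the gradient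
  have hfc : Continuous f := hf.continuous
  have hgc : Continuous (gradient f) := by
    have h1 : Continuous (fderiv ℝ f) := hf.continuous_fderiv one_ne_zero
    exact (InnerProductSpace.toDual ℝ (EuclideanSpace ℝ (Fin d))).symm.continuous.comp h1
  -- f (x n) is antitone
  have hmono : ∀ m n, m ≤ n → f (x n) ≤ f (x m) := by
    intro m n hmn
    induction n, hmn using Nat.le_induction with
    | base => exact le_refl _
    | succ n hmn ih =>
      have := hdec n
      nlinarith [sq_nonneg ‖g n‖, ih]
  -- f (x n) ≥ fstar
  have hge : ∀ n, fstar ≤ f (x n) := by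
    intro n
    exact le_of_tendsto hfstar (eventually_atTop.2 ⟨n, fun m hm => hmono n m hm⟩)
  set Δ : ℕ → ℝ := fun n => f (x n) - fstar with hΔ
  have hΔ0 : ∀ n, 0 ≤ Δ n := fun n => sub_nonneg.mpr (hge n)
  have hΔmono : ∀ n, Δ (n + 1) ≤ Δ n := fun n => by
    have := hmono n (n+1) (Nat.le_succ n); simp only [hΔ]; linarith
  have hΔdec : ∀ n, a * ‖g n‖ ^ 2 ≤ Δ n - Δ (n + 1) := fun n => by
    have := hdec n; simp only [hΔ]; linarith
  -- eventually in V
  have hV : ∃ N, ∀ n ≥ N, x n ∈ V := by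
    by_contra h
    push_neg at h
    have hfreq : ∃ᶠ n in atTop, x n ∈ X \ V := by
      rw [frequently_atTop]
      intro N; obtain ⟨n, hn, hnv⟩ := h N
      exact ⟨n, hn, hxX n, hnv⟩
    obtain ⟨φ, hφmono, hφ⟩ := Filter.extraction_of_frequently_atTop hfreq
    have hK : IsCompact (X \ V) := hX.of_isClosed_subset
      (hX.isClosed.inter hVopen.isClosed_compl) Set.diff_subset
    obtain ⟨z, hzK, ψ, hψmono, hψ⟩ := hK.tendsto_subseq hφ
    have h1 : Tendsto (fun n => f (x (φ (ψ n)))) atTop (𝓝 (f z)) :=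
      (hfc.tendsto z).comp hψ
    have h2 : Tendsto (fun n => f (x (φ (ψ n)))) atTop (𝓝 fstar) :=
      hfstar.comp ((hφmono.comp hψmono).tendsto_atTop)
    have : f z = fstar := tendsto_nhds_unique h1 h2
    exact hzK.2 (hΓV ⟨hzK.1, this⟩)
  obtain ⟨N, hN⟩ := hV
  -- key step inequality
  have hkey : ∀ n ≥ N, ‖g n‖ ≤ κ / (a * θ) * (Δ n ^ θ - Δ (n + 1) ^ θ) := by
    intro n hn
    have hpos : 0 < κ / (a * θ) := div_pos hκ (mul_pos ha hθ0)
    by_cases hgz : g n = 0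
    · rw [hgz, norm_zero]
      apply mul_nonneg hpos.le
      have := Real.rpow_le_rpow (hΔ0 (n+1)) (hΔmono n) hθ0.le
      linarith
    · have hgn : 0 < ‖g n‖ := norm_pos_iff.mpr hgz
      have hΔn : 0 < Δ n := by
        rcases lt_or_eq_of_le (hΔ0 n) with h | h
        · exact h
        · exfalso
          have h1 := hΔdec n
          have h2 := hΔ0 (n + 1)
          nlinarith [mul_pos ha (pow_pos hgn 2)]
      have hL : Δ n ^ (1 - θ) ≤ κ * ‖g n‖ := by
        have := hloj (x n) (hN n hn)
        rwa [abs_of_nonneg (hΔ0 n)] at this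
      have hcon := concave_rpow_aux hθ0 hθ1' hΔn (hΔ0 (n+1)) (hΔmono n)
      have h3 : θ * Δ n ^ (θ - 1) * (a * ‖g n‖ ^ 2) ≤ Δ n ^ θ - Δ (n+1) ^ θ := by
        refine le_trans ?_ hcon
        have h4 : 0 ≤ θ * Δ n ^ (θ - 1) :=
          mul_nonneg hθ0.le (Real.rpow_nonneg hΔn.le _)
        exact mul_le_mul_of_nonneg_left (hΔdec n) h4
      -- Δ n ^ (θ - 1) = (Δ n ^ (1 - θ))⁻¹ ≥ (κ ‖g n‖)⁻¹
      have h5 : Δ n ^ (θ - 1) = (Δ n ^ (1 - θ))⁻¹ := by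
        rw [← Real.rpow_neg hΔn.le]; ring_nf
      have h6 : (κ * ‖g n‖)⁻¹ ≤ Δ n ^ (θ - 1) := by
        rw [h5]
        apply inv_anti₀ (Real.rpow_pos_of_pos hΔn _) hL
      have h7 : 0 < κ * ‖g n‖ := mul_pos hκ hgn
      have h8 : θ * (κ * ‖g n‖)⁻¹ * (a * ‖g n‖ ^ 2) ≤ Δ n ^ θ - Δ (n+1) ^ θ := by
        refine le_trans ?_ h3
        apply mul_le_mul_of_nonneg_right
        · exact mul_le_mul_of_nonneg_left h6 hθ0.le
        · positivity
      rw [div_mul_eq_mul_div, le_div_iff₀ (mul_pos ha hθ0)]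
      have : θ * (κ * ‖g n‖)⁻¹ * (a * ‖g n‖ ^ 2) = θ * a * ‖g n‖ / κ := by
        field_simp
      rw [this] at h8
      rw [div_le_iff₀ hκ] at h8
      nlinarith
  -- summability
  have hSum : Summable (fun n => ‖g n‖) := by
    rw [← summable_nat_add_iff N]
    apply summable_of_sum_range_le (c := κ / (a * θ) * Δ N ^ θ)
      (fun n => norm_nonneg _)
    intro n
    calc ∑ i ∈ Finset.range n, ‖g (i + N)‖
        ≤ ∑ i ∈ Finset.range n, κ / (a * θ) * (Δ (i + N) ^ θ - Δ (i + N + 1) ^ θ) := by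
          apply Finset.sum_le_sum
          intro i _
          exact hkey (i + N) (Nat.le_add_left N i)
      _ = κ / (a * θ) * (Δ N ^ θ - Δ (n + N) ^ θ) := by
          rw [← Finset.mul_sum]
          congr 1
          have := Finset.sum_range_sub' (fun i => Δ (i + N) ^ θ) n
          simp only [Nat.zero_add] at this
          rw [← this]
          apply Finset.sum_congr rfl
          intro i _
          rw [Nat.add_right_comm i 1 N]
      _ ≤ κ / (a * θ) * Δ N ^ θ := by
          have h1 : 0 ≤ Δ (n + N) ^ θ := Real.rpow_nonneg (hΔ0 _) θ
          have h2 : 0 ≤ κ / (a * θ) := le_of_lt (div_pos hκ (mul_pos ha hθ0))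
          nlinarith
  -- gradient → 0
  have hgto : Tendsto (fun n => g n) atTop (𝓝 0) := by
    rw [tendsto_zero_iff_norm_tendsto_zero]
    exact hSum.tendsto_atTop_zero
  refine ⟨hgto, hSum, ?_⟩
  -- x is Cauchy
  have hCauchy : CauchySeq x := by
    apply cauchySeq_of_dist_le_of_summable (fun n => C * ‖g n‖)
    · intro n
      rw [dist_eq_norm, norm_sub_rev]
      exact hstep n
    · exact hSum.mul_left C
  obtain ⟨xstar, hxstar⟩ := cauchySeq_tendsto_of_complete hCauchy
  refine ⟨xstar, hxstar, ?_⟩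
  have h1 : Tendsto (fun n => gradient f (x n)) atTop (𝓝 (gradient f xstar)) :=
    (hgc.tendsto xstar).comp hxstar
  exact tendsto_nhds_unique h1 hgto
end

section
/- Under the hypotheses of the preceding convergence lemma (compact X ⊆ ℝ^d, sufficient decrease f(x_{n+1}) ≤ f(x_n) − a ‖∇f(x_n)‖², step bound ‖x_{n+1} − x_n‖ ≤ C ‖∇f(x_n)‖), if the Łojasiewicz exponent can be taken to be θ = 1/2 on a neighborhood of the limit, i.e., |f(y) − f*|^{1/2} ≤ κ ‖∇f(y)‖ near the limit point x*, then the convergence is geometric: there exist constants M > 0 and 0 < q < 1 such that ‖x_n − x*‖ ≤ M q^n for all n. -/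
open Filter Topology

/-- If, in addition to the hypotheses of the Łojasiewicz convergence lemma (compact
`X ⊆ ℝ^d`, sufficient decrease, step bound), the Łojasiewicz exponent may be taken to
be `θ = 1/2` on a neighborhood of the limit `x*`, then the convergence is geometric:
`‖x_n - x*‖ ≤ M qⁿ` for some `M > 0` and `0 < q < 1`. -/
theorem lojasiewicz_geometric_convergence {d : ℕ}
    (X : Set (EuclideanSpace ℝ (Fin d))) (hX : IsCompact X)
    (f : EuclideanSpace ℝ (Fin d) → ℝ) (hf : ContDiff ℝ 1 f)
    (x : ℕ → EuclideanSpace ℝ (Fin d)) (hxX : ∀ n, x n ∈ X)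
    (a C : ℝ) (ha : 0 < a) (hC : 0 < C)
    (hdec : ∀ n, f (x (n + 1)) ≤ f (x n) - a * ‖gradient f (x n)‖ ^ 2)
    (hstep : ∀ n, ‖x (n + 1) - x n‖ ≤ C * ‖gradient f (x n)‖)
    (fstar : ℝ) (hfstar : Tendsto (fun n => f (x n)) atTop (𝓝 fstar))
    (xstar : EuclideanSpace ℝ (Fin d)) (hxstar : Tendsto x atTop (𝓝 xstar))
    (κ : ℝ) (hκ : 0 < κ)
    (V : Set (EuclideanSpace ℝ (Fin d))) (hV : V ∈ 𝓝 xstar)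
    (hloj : ∀ y ∈ V, |f y - fstar| ^ ((1 : ℝ) / 2) ≤ κ * ‖gradient f y‖) :
    ∃ M > (0 : ℝ), ∃ q : ℝ, 0 < q ∧ q < 1 ∧ ∀ n, ‖x n - xstar‖ ≤ M * q ^ n := by
  set g : ℕ → ℝ := fun n => ‖gradient f (x n)‖ with hg
  set e : ℕ → ℝ := fun n => f (x n) - fstar with he
  have hgnn : ∀ n, 0 ≤ g n := fun n => norm_nonneg _
  have hanti : Antitone e := antitone_nat_of_succ_le (by
    intro n
    have h1 := hdec n
    have h0 : 0 ≤ g n ^ 2 := sq_nonneg _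
    simp only [he]
    nlinarith [mul_nonneg ha.le h0])
  have he0 : Tendsto e atTop (𝓝 0) := by
    have := hfstar.sub_const fstar
    simpa using this
  have henn : ∀ n, 0 ≤ e n := fun n => hanti.le_of_tendsto he0 n
  obtain ⟨N, hN⟩ : ∃ N, ∀ n ≥ N, x n ∈ V :=
    eventually_atTop.mp (hxstar.eventually (eventually_of_mem hV fun y hy => hy))
  -- contraction factor
  set q₀ : ℝ := max (1 - a / κ ^ 2) (1 / 2) with hq₀def
  have hκ2 : (0:ℝ) < κ ^ 2 := by positivity
  have hq₀0 : (0:ℝ) < q₀ := lt_of_lt_of_le (by norm_num) (le_max_right _ _)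
  have hq₀1 : q₀ < 1 := by
    apply max_lt _ (by norm_num)
    have : 0 < a / κ ^ 2 := div_pos ha hκ2
    linarith
  -- Łojasiewicz inequality squared
  have hkey : ∀ n ≥ N, e n ≤ κ ^ 2 * g n ^ 2 := by
    intro n hn
    have h1 : e n ^ ((1:ℝ)/2) ≤ κ * g n := by
      have := hloj (x n) (hN n hn)
      rwa [abs_of_nonneg (henn n)] at this
    rw [← Real.sqrt_eq_rpow] at h1
    calc e n = Real.sqrt (e n) ^ 2 := (Real.sq_sqrt (henn n)).symm
      _ ≤ (κ * g n) ^ 2 := pow_le_pow_left₀ (Real.sqrt_nonneg _) h1 2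
      _ = κ ^ 2 * g n ^ 2 := by ring
  -- contraction
  have hcon : ∀ n ≥ N, e (n + 1) ≤ q₀ * e n := by
    intro n hn
    have h1 := hdec n
    have h2 := hkey n hn
    have h3 : e (n + 1) ≤ e n - a * g n ^ 2 := by
      simp only [he]; linarith
    have h4 : a * e n ≤ a * (κ ^ 2 * g n ^ 2) := mul_le_mul_of_nonneg_left h2 ha.le
    have h5 : e (n + 1) ≤ (1 - a / κ ^ 2) * e n := by
      have hκ2' : κ ^ 2 ≠ 0 := ne_of_gt hκ2
      rw [sub_mul, one_mul, div_mul_eq_mul_div, le_sub_iff_add_le, ← le_sub_iff_add_le',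
        div_le_iff₀ hκ2]
      nlinarith
    calc e (n + 1) ≤ (1 - a / κ ^ 2) * e n := h5
      _ ≤ q₀ * e n := mul_le_mul_of_nonneg_right (le_max_left _ _) (henn n)
  have hgeom : ∀ k, e (N + k) ≤ e N * q₀ ^ k := by
    intro k
    induction k with
    | zero => simp
    | succ k ih =>
      have hc := hcon (N + k) (Nat.le_add_right _ _)
      calc e (N + (k+1)) = e (N + k + 1) := by ring_nf
        _ ≤ q₀ * e (N + k) := hc
        _ ≤ q₀ * (e N * q₀ ^ k) := mul_le_mul_of_nonneg_left ih hq₀0.le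
        _ = e N * q₀ ^ (k+1) := by ring
  set q : ℝ := Real.sqrt q₀ with hqdef
  have hq0 : 0 < q := Real.sqrt_pos.mpr hq₀0
  have hq1 : q < 1 := by
    rw [hqdef, show (1:ℝ) = Real.sqrt 1 by simp]
    exact Real.sqrt_lt_sqrt hq₀0.le hq₀1
  have hqsq : q ^ 2 = q₀ := Real.sq_sqrt hq₀0.le
  -- gradient bound
  have hgbd : ∀ n, a * g n ^ 2 ≤ e n := by
    intro n
    have h1 := hdec n
    have h2 := henn (n + 1)
    simp only [he] at *
    linarith
  -- step bound for n ≥ N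
  set B : ℝ := C * Real.sqrt (e N / a) with hBdef
  have hBnn : 0 ≤ B := mul_nonneg hC.le (Real.sqrt_nonneg _)
  have hstep' : ∀ k, ‖x (N + k + 1) - x (N + k)‖ ≤ B * q ^ k := by
    intro k
    have h1 : g (N + k) ^ 2 ≤ e N * q₀ ^ k / a := by
      rw [le_div_iff₀ ha]
      have hb := hgbd (N + k)
      have hgm := hgeom k
      nlinarith
    have h2 : g (N + k) ≤ Real.sqrt (e N * q₀ ^ k / a) := by
      rw [← Real.sqrt_sq (hgnn (N + k))]
      exact Real.sqrt_le_sqrt h1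
    have h3 : Real.sqrt (e N * q₀ ^ k / a) = Real.sqrt (e N / a) * q ^ k := by
      rw [show e N * q₀ ^ k / a = (e N / a) * q₀ ^ k by ring,
        Real.sqrt_mul (div_nonneg (henn N) ha.le), ← hqsq, ← pow_mul, mul_comm 2 k, pow_mul,
        Real.sqrt_sq (pow_nonneg hq0.le k)]
    calc ‖x (N + k + 1) - x (N + k)‖ ≤ C * g (N + k) := hstep (N + k)
      _ ≤ C * (Real.sqrt (e N / a) * q ^ k) := by
          rw [← h3]; exact mul_le_mul_of_nonneg_left h2 hC.le
      _ = B * q ^ k := by ring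
  -- geometric sum bound
  have hsum : ∀ m, (∑ j ∈ Finset.range m, q ^ j) ≤ 1 / (1 - q) := by
    intro m
    have h1q : q - 1 ≠ 0 := by intro h; apply absurd hq1; rw [sub_eq_zero] at h; simp [h]
    rw [geom_sum_eq (ne_of_lt hq1), le_div_iff₀ (by linarith)]
    have heq : (q ^ m - 1) / (q - 1) * (1 - q) = 1 - q ^ m := by
      field_simp
      ring
    rw [heq]
    have := pow_nonneg hq0.le m
    linarith
  -- tail sum bound
  set D : ℝ := B / (1 - q) with hDdef
  have hDnn : 0 ≤ D := div_nonneg hBnn (by linarith)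
  have htail : ∀ k, ‖x (N + k) - xstar‖ ≤ D * q ^ k := by
    intro k
    have hmono : Tendsto (fun m => N + k + m) atTop atTop :=
      tendsto_atTop_mono (fun m => Nat.le_add_left m (N + k)) tendsto_id
    have hx2 : Tendsto (fun m => x (N + k + m)) atTop (𝓝 xstar) := hxstar.comp hmono
    have hlim : Tendsto (fun m => ‖x (N + k) - x (N + k + m)‖) atTop
        (𝓝 ‖x (N + k) - xstar‖) := (tendsto_const_nhds.sub hx2).norm
    apply le_of_tendsto hlim
    filter_upwards with m
    calc ‖x (N + k) - x (N + k + m)‖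
        ≤ ∑ j ∈ Finset.range m, ‖x (N + k + j + 1) - x (N + k + j)‖ := by
          induction m with
          | zero => simp
          | succ m ih =>
            calc ‖x (N + k) - x (N + k + (m + 1))‖
                ≤ ‖x (N + k) - x (N + k + m)‖ + ‖x (N + k + m + 1) - x (N + k + m)‖ := by
                  have hrw : x (N + k) - x (N + k + (m+1)) =
                      (x (N + k) - x (N + k + m)) - (x (N + k + m + 1) - x (N + k + m)) := by
                    rw [show N + k + (m+1) = N + k + m + 1 by ring]; abel
                  rw [hrw]
                  exact norm_sub_le _ _
              _ ≤ ∑ j ∈ Finset.range (m+1), ‖x (N + k + j + 1) - x (N + k + j)‖ := by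
                  rw [Finset.sum_range_succ]; linarith
      _ ≤ ∑ j ∈ Finset.range m, B * q ^ (k + j) := by
          apply Finset.sum_le_sum
          intro j _
          have hs := hstep' (k + j)
          rw [show N + (k + j) = N + k + j by ring] at hs
          exact hs
      _ = B * q ^ k * ∑ j ∈ Finset.range m, q ^ j := by
          rw [Finset.mul_sum]
          congr 1; ext j; rw [pow_add]; ring
      _ ≤ B * q ^ k * (1 / (1 - q)) :=
          mul_le_mul_of_nonneg_left (hsum m) (by positivity)
      _ = D * q ^ k := by rw [hDdef]; field_simp
  -- assemble M
  set S : ℝ := ∑ n ∈ Finset.range N, ‖x n - xstar‖ / q ^ n with hSdef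
  have hSnn : 0 ≤ S := Finset.sum_nonneg fun i _ => div_nonneg (norm_nonneg _) (by positivity)
  refine ⟨D / q ^ N + S + 1, by positivity, q, hq0, hq1, fun n => ?_⟩
  rcases le_or_gt N n with hn | hn
  · obtain ⟨k, rfl⟩ := Nat.exists_eq_add_of_le hn
    have h1 := htail k
    have h2 : D * q ^ k = D / q ^ N * q ^ (N + k) := by
      rw [pow_add]
      field_simp
    calc ‖x (N + k) - xstar‖ ≤ D / q ^ N * q ^ (N + k) := by rw [← h2]; exact h1
      _ ≤ (D / q ^ N + S + 1) * q ^ (N + k) := by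
          apply mul_le_mul_of_nonneg_right _ (by positivity)
          linarith
  · have hmem : n ∈ Finset.range N := Finset.mem_range.mpr hn
    have h1 : ‖x n - xstar‖ / q ^ n ≤ S :=
      Finset.single_le_sum (f := fun i => ‖x i - xstar‖ / q ^ i)
        (fun i _ => div_nonneg (norm_nonneg _) (by positivity)) hmem
    have h2 : ‖x n - xstar‖ = ‖x n - xstar‖ / q ^ n * q ^ n := by
      field_simp
    rw [h2]
    apply mul_le_mul_of_nonneg_right _ (by positivity)
    linarith [div_nonneg hDnn (pow_nonneg hq0.le N)]
end
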